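/- For infinitely many positive integers n, there exists a function σ: E(K_{4n}) → {-1,1} with σ(E(K_{4n})) = 2 such that σ(M) ≠ 0 for every perfect matching M of K_{4n}. -/

import Mathlib

open Finset

noncomputable def sumE {m : ℕ} (σ : Sym2 (Fin m) → ℤ) (S : Set (Sym2 (Fin m))) : ℤ :=
  ∑ e ∈ S.toFinite.toFinset, σ e

def Kc (m : ℕ) : SimpleGraph (Fin m) := ⊤

lemma card_filter_val_lt (N a : ℕ) (h : a ≤ N) :
    #(univ.filter fun v : Fin N => (v : ℕ) < a) = a := by
  have := Finset.card_bij (s := univ.filter fun v : Fin N => (v : ℕ) < a)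
    (t := Finset.range a) (fun v _ => (v : ℕ))
    (by intro v hv; simp at hv ⊢; exact hv)
    (by intro v _ w _ hvw; exact Fin.val_injective hvw)
    (by intro j hj; simp at hj
        exact ⟨⟨j, lt_of_lt_of_le hj h⟩, by simp [hj], rfl⟩)
  simpa using this

lemma sum_eps (n a : ℕ) (haN : a < 4*n) (ε : Fin (4*n) → ℤ)
    (hε : ∀ v, ε v = if (v : ℕ) < a then -1 else 1) :
    ∑ v, ε v = 4*(n:ℤ) - 2*a := by
  have h1 : ∑ v, ε v = ∑ v ∈ univ.filter (fun v : Fin (4*n) => (v:ℕ) < a), (-1:ℤ)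
      + ∑ v ∈ univ.filter (fun v : Fin (4*n) => ¬ (v:ℕ) < a), (1:ℤ) := by
    rw [← Finset.sum_ite]; exact Finset.sum_congr rfl (fun v _ => hε v)
  rw [h1, Finset.sum_const, Finset.sum_const]
  have hc1 : #(univ.filter fun v : Fin (4*n) => (v : ℕ) < a) = a :=
    card_filter_val_lt _ _ (le_of_lt haN)
  have hc2 : #(univ.filter fun v : Fin (4*n) => ¬ (v : ℕ) < a) = 4*n - a := by
    have := Finset.card_filter_add_card_filter_not
      (s := (univ : Finset (Fin (4*n)))) (p := fun v => (v : ℕ) < a)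
    simp only [Finset.card_univ, Fintype.card_fin] at this
    omega
  rw [hc1, hc2]
  have : ((4*n - a : ℕ) : ℤ) = 4*(n:ℤ) - a := by
    push_cast [Nat.cast_sub (le_of_lt haN)]; ring
  simp [this]; ring

lemma prod_eps (n a : ℕ) (haN : a < 4*n) (ε : Fin (4*n) → ℤ)
    (hε : ∀ v, ε v = if (v : ℕ) < a then -1 else 1) :
    ∏ v, ε v = (-1)^a := by
  have h1 : ∏ v, ε v = (∏ v ∈ univ.filter (fun v : Fin (4*n) => (v:ℕ) < a), (-1:ℤ))
      * ∏ v ∈ univ.filter (fun v : Fin (4*n) => ¬ (v:ℕ) < a), (1:ℤ) := by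
    rw [← Finset.prod_ite]; exact Finset.prod_congr rfl (fun v _ => hε v)
  rw [h1, Finset.prod_const, Finset.prod_const,
    card_filter_val_lt _ _ (le_of_lt haN)]
  simp

lemma sum_offdiag (n a : ℕ) (haN : a < 4*n) (ε : Fin (4*n) → ℤ)
    (hε : ∀ v, ε v = if (v : ℕ) < a then -1 else 1) :
    ∑ p ∈ (univ : Finset (Fin (4*n))).offDiag, ε p.1 * ε p.2
      = (4*(n:ℤ) - 2*a)^2 - 4*n := by
  have hsq : ∀ v, ε v * ε v = 1 := by
    intro v; rw [hε]; by_cases h : (v:ℕ) < a <;> simp [h]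
  have hprod : ∑ p ∈ (univ : Finset (Fin (4*n))) ×ˢ univ, ε p.1 * ε p.2
      = (∑ v, ε v) * (∑ v, ε v) := by
    rw [Finset.sum_mul_sum]
    rw [Finset.sum_product]
  have hdiag : ∑ p ∈ (univ : Finset (Fin (4*n))).diag, ε p.1 * ε p.2 = 4*n := by
    rw [Finset.sum_diag]
    simp only [hsq, Finset.sum_const, Finset.card_univ, Fintype.card_fin]
    simp
  have hsplit : ∑ p ∈ (univ : Finset (Fin (4*n))) ×ˢ univ, ε p.1 * ε p.2
      = ∑ p ∈ (univ : Finset (Fin (4*n))).diag, ε p.1 * ε p.2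
        + ∑ p ∈ (univ : Finset (Fin (4*n))).offDiag, ε p.1 * ε p.2 := by
    rw [← Finset.sum_union (Finset.disjoint_diag_offDiag _), Finset.diag_union_offDiag]
  rw [sum_eps n a haN ε hε] at hprod
  rw [hprod, hdiag] at hsplit
  linarith [hsplit, sq ((4*(n:ℤ) - 2*a))]

lemma edge_double_count (n : ℕ) (ε : Fin (4*n) → ℤ) :
    ∑ p ∈ (univ : Finset (Fin (4*n))).offDiag, ε p.1 * ε p.2
      = 2 * ∑ e ∈ (Kc (4*n)).edgeSet.toFinite.toFinset,
          Sym2.lift ⟨fun x y => ε x * ε y, fun x y => mul_comm _ _⟩ e := by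
  classical
  set F := (Kc (4*n)).edgeSet.toFinite.toFinset with hF
  have hmap : ∀ p ∈ (univ : Finset (Fin (4*n))).offDiag, s(p.1, p.2) ∈ F := by
    intro p hp
    rw [Finset.mem_offDiag] at hp
    simp [hF, Set.Finite.mem_toFinset, Kc, SimpleGraph.mem_edgeSet, hp.2.2]
  rw [← Finset.sum_fiberwise_of_maps_to hmap (fun p => ε p.1 * ε p.2)]
  rw [Finset.mul_sum]
  refine Finset.sum_congr rfl ?_
  intro e he
  induction e using Sym2.inductionOn with
  | hf x y =>
    have hxy : x ≠ y := by
      simp only [hF, Set.Finite.mem_toFinset, SimpleGraph.mem_edgeSet, Kc,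
        SimpleGraph.top_adj] at he
      exact he
    have hfilter : (univ : Finset (Fin (4*n))).offDiag.filter
        (fun p => s(p.1, p.2) = s(x, y)) = {(x, y), (y, x)} := by
      ext ⟨u, v⟩
      simp only [Finset.mem_filter, Finset.mem_offDiag, Finset.mem_univ, true_and,
        Sym2.eq_iff, Finset.mem_insert, Finset.mem_singleton, Prod.mk.injEq]
      constructor
      · rintro ⟨huv, (⟨rfl, rfl⟩ | ⟨rfl, rfl⟩)⟩
        · left; exact ⟨rfl, rfl⟩
        · right; exact ⟨rfl, rfl⟩
      · rintro (⟨rfl, rfl⟩ | ⟨rfl, rfl⟩)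
        · exact ⟨hxy, Or.inl ⟨rfl, rfl⟩⟩
        · exact ⟨hxy.symm, Or.inr ⟨rfl, rfl⟩⟩
    rw [hfilter, Finset.sum_pair (by simp [Prod.ext_iff, hxy])]
    simp [Sym2.lift_mk]
    ring

lemma matching_fiber (n : ℕ) (ε : Fin (4*n) → ℤ)
    (M : (Kc (4*n)).Subgraph) (hM : M.IsPerfectMatching) :
    2 * #(M.edgeSet.toFinite.toFinset) = 4*n ∧
    ∏ e ∈ M.edgeSet.toFinite.toFinset,
        Sym2.lift ⟨fun x y => ε x * ε y, fun x y => mul_comm _ _⟩ e = ∏ v, ε v := by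
  classical
  set FM := M.edgeSet.toFinite.toFinset with hFM
  set f : Fin (4*n) → Sym2 (Fin (4*n)) :=
    fun v => (hM.1.toEdge ⟨v, hM.2 v⟩ : M.edgeSet) with hf
  have hvf : ∀ v : Fin (4*n), v ∈ (f v : Sym2 (Fin (4*n))) := by
    intro v
    obtain ⟨w, hw, -⟩ := hM.1 (hM.2 v)
    have : hM.1.toEdge ⟨v, hM.2 v⟩ = ⟨s(v, w), hw⟩ :=
      SimpleGraph.Subgraph.IsMatching.toEdge_eq_of_adj hM.1 hw
    simp [hf, this]
  have hmemiff : ∀ (v : Fin (4*n)) (e : Sym2 (Fin (4*n))), e ∈ M.edgeSet →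
      ((f v : Sym2 (Fin (4*n))) = e ↔ v ∈ e) := by
    intro v e he
    constructor
    · rintro rfl; exact hvf v
    · intro hv
      induction e using Sym2.inductionOn with
      | hf x y =>
        rw [Sym2.mem_iff] at hv
        rw [SimpleGraph.Subgraph.mem_edgeSet] at he
        rcases hv with rfl | rfl
        · have : hM.1.toEdge ⟨v, hM.2 v⟩ = ⟨s(v, y), he⟩ :=
            SimpleGraph.Subgraph.IsMatching.toEdge_eq_of_adj hM.1 he
          simp [hf, this]
        · have : hM.1.toEdge ⟨v, hM.2 v⟩ = ⟨s(v, x), M.adj_symm he⟩ :=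
            SimpleGraph.Subgraph.IsMatching.toEdge_eq_of_adj hM.1 (M.adj_symm he)
          simp [hf, this, Sym2.eq_swap]
  have hmapsto : ∀ v ∈ (univ : Finset (Fin (4*n))), (f v : Sym2 (Fin (4*n))) ∈ FM := by
    intro v _
    simp only [hFM, Set.Finite.mem_toFinset]
    exact (hM.1.toEdge ⟨v, hM.2 v⟩).2
  have hfiber : ∀ e ∈ FM, ∃ x y : Fin (4*n), x ≠ y ∧ e = s(x, y) ∧
      (univ : Finset (Fin (4*n))).filter (fun v => (f v : Sym2 (Fin (4*n))) = e)
        = {x, y} := by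
    intro e he
    rw [hFM, Set.Finite.mem_toFinset] at he
    induction e using Sym2.inductionOn with
    | hf x y =>
      have hadj : M.Adj x y := he
      have hxy : x ≠ y := by
        have := M.adj_sub hadj
        simpa [Kc] using this
      refine ⟨x, y, hxy, rfl, ?_⟩
      ext v
      simp only [Finset.mem_filter, Finset.mem_univ, true_and, Finset.mem_insert,
        Finset.mem_singleton]
      rw [hmemiff v _ he, Sym2.mem_iff]
  constructor
  · have := Finset.card_eq_sum_card_fiberwise hmapsto
    simp only [Finset.card_univ, Fintype.card_fin] at this
    have h2 : ∀ e ∈ FM,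
        #((univ : Finset (Fin (4*n))).filter (fun v => (f v : Sym2 (Fin (4*n))) = e)) = 2 := by
      intro e he
      obtain ⟨x, y, hxy, -, hfil⟩ := hfiber e he
      rw [hfil, Finset.card_pair hxy]
    have h3 : ∑ b ∈ FM, #((univ : Finset (Fin (4*n))).filter
        (fun v => (f v : Sym2 (Fin (4*n))) = b)) = 2 * #FM := by
      rw [Finset.sum_congr rfl h2, Finset.sum_const, smul_eq_mul, mul_comm]
    exact (this.trans h3).symm
  · rw [← Finset.prod_fiberwise_of_maps_to hmapsto ε]
    refine Finset.prod_congr rfl ?_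
    intro e he
    obtain ⟨x, y, hxy, rfl, hfil⟩ := hfiber e he
    rw [hfil, Finset.prod_pair hxy]
    simp [Sym2.lift_mk]

theorem stmt8 : ∀ N : ℕ, ∃ n : ℕ, N < n ∧
    ∃ σ : Sym2 (Fin (4*n)) → ℤ,
      (∀ e ∈ (Kc (4*n)).edgeSet, σ e = 1 ∨ σ e = -1) ∧
      sumE σ (Kc (4*n)).edgeSet = 2 ∧
      ∀ M : (Kc (4*n)).Subgraph, M.IsPerfectMatching → sumE σ M.edgeSet ≠ 0 := by
  classical
  intro N
  set m : ℕ := N + 2 with hm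
  have h1 : m^2 % 2 = m % 2 := by
    rw [Nat.pow_mod]; rcases Nat.mod_two_eq_zero_or_one m with h | h <;> rw [h] <;> rfl
  have hexp : m^2 = N^2 + 4*N + 4 := by simp only [hm]; ring
  have h4 : 4 ≤ m^2 := by omega
  obtain ⟨K, hK⟩ : ∃ K, m^2 = K + 4 := ⟨m^2 - 4, by omega⟩
  have hmK : m ≤ K + 4 := hK ▸ Nat.le_self_pow (by norm_num) m
  have hKN : N ≤ K := by nlinarith [hexp, hK, sq_nonneg N]
  refine ⟨K + 3, by omega, ?_⟩
  set n : ℕ := K + 3 with hn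
  set a : ℕ := 2 * K + 6 - m with ha
  have ham : a + m = 2 * n := by omega
  have haN : a < 4 * n := by omega
  have hpar : (a + n) % 2 = 1 := by omega
  set ε : Fin (4 * n) → ℤ := fun v => if (v : ℕ) < a then -1 else 1 with hεdef
  have hε : ∀ v, ε v = if (v : ℕ) < a then -1 else 1 := fun v => rfl
  have hε1 : ∀ v, ε v = 1 ∨ ε v = -1 := by
    intro v; by_cases h : (v : ℕ) < a <;> simp [hε, h]
  set σ : Sym2 (Fin (4 * n)) → ℤ :=
    Sym2.lift ⟨fun x y => ε x * ε y, fun x y => mul_comm _ _⟩ with hσdef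
  have hσ1 : ∀ e, σ e = 1 ∨ σ e = -1 := by
    intro e
    induction e using Sym2.inductionOn with
    | hf x y =>
      rcases hε1 x with h | h <;> rcases hε1 y with h' | h' <;>
        simp [hσdef, Sym2.lift_mk, h, h']
  have hmn : (m:ℤ)^2 = (n:ℤ) + 1 := by
    have : m^2 = n + 1 := by omega
    exact_mod_cast congrArg (Nat.cast : ℕ → ℤ) this
  refine ⟨σ, fun e _ => hσ1 e, ?_, ?_⟩
  · -- total sum is 2
    have hdc := edge_double_count n ε
    rw [sum_offdiag n a haN ε hε] at hdc
    have hS : (4*(n:ℤ) - 2*a) = 2*m := by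
      have : ((a:ℤ) + m) = 2*(n:ℤ) := by exact_mod_cast congrArg (Nat.cast : ℕ → ℤ) ham
      linarith
    rw [hS] at hdc
    have : (2*(m:ℤ))^2 - 4*n = 4 := by nlinarith [hmn]
    rw [this] at hdc
    show ∑ e ∈ (Kc (4*n)).edgeSet.toFinite.toFinset, σ e = 2
    rw [hσdef]
    linarith [hdc]
  · -- perfect matchings
    intro M hM hsum
    obtain ⟨hcard, hprod⟩ := matching_fiber n ε M hM
    rw [prod_eps n a haN ε hε] at hprod
    set FM := M.edgeSet.toFinite.toFinset with hFM
    have hsum' : ∑ e ∈ FM, σ e = 0 := hsum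
    set P := FM.filter (fun e => σ e = 1) with hP
    set T := FM.filter (fun e => ¬ σ e = 1) with hT
    have hTneg : ∀ e ∈ T, σ e = -1 := by
      intro e he
      rw [hT, Finset.mem_filter] at he
      rcases hσ1 e with h | h
      · exact absurd h he.2
      · exact h
    have hsplitc : #P + #T = #FM := Finset.card_filter_add_card_filter_not _
    have hsplits : ∑ e ∈ P, σ e + ∑ e ∈ T, σ e = 0 := by
      rw [Finset.sum_filter_add_sum_filter_not FM (fun e => σ e = 1) σ]
      exact hsum'
    have hPs : ∑ e ∈ P, σ e = #P := by
      rw [Finset.sum_congr rfl (fun e he => (Finset.mem_filter.mp he).2)]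
      simp [hP]
    have hTs : ∑ e ∈ T, σ e = -#T := by
      rw [Finset.sum_congr rfl hTneg]
      simp
    have hPT : #P = #T := by
      rw [hPs, hTs] at hsplits
      omega
    have hTn : #T = n := by omega
    have hprodsplit : ∏ e ∈ FM, σ e = (-1:ℤ)^#T := by
      rw [← Finset.prod_filter_mul_prod_filter_not FM (fun e => σ e = 1) σ]
      rw [Finset.prod_congr rfl (fun e he => (Finset.mem_filter.mp he).2),
        Finset.prod_congr rfl hTneg]
      simp
    rw [hprodsplit, hTn] at hprod
    -- (-1)^n = (-1)^a  but a + n is odd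
    have hone : (-1:ℤ)^(a+n) = 1 := by
      rw [pow_add, ← hprod]
      rw [← mul_pow]
      norm_num
    have hodd : Odd (a + n) := by
      rcases Nat.even_or_odd (a + n) with h | h
      · exfalso; obtain ⟨k, hk⟩ := h; omega
      · exact h
    rw [hodd.neg_one_pow] at hone
    norm_num at hone
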